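/- Let S = {(x_i, y_i)}_{i=1}^n ⊆ ℝ × {−1,1} be a dataset with x_1 < x_2 < … < x_n, and let r ≥ 0 be such that |{i ∈ [n−1] : y_i ≠ y_{i+1}}| ≤ r. If θ = (w, b, v) satisfies the KKT conditions of the maximum-margin problem for a width-k depth-2 ReLU network on S, then the function N_θ : ℝ → ℝ is piecewise affine with at most 32r + 67 linear regions; equivalently, the set of points x ∈ ℝ at which N_θ is not locally affine has at most 32r + 66 elements. -/

import Mathlib

open Finset

/-- The ReLU activation function. -/
noncomputable def relu (z : ℝ) : ℝ := max 0 z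

/-- A width-`k` depth-2 ReLU network with weights `w`, biases `b`, output weights `v`. -/
noncomputable def NNet {k : ℕ} (w b v : Fin k → ℝ) (x : ℝ) : ℝ :=
  ∑ j : Fin k, v j * relu (w j * x + b j)

/-- `θ = (w, b, v)` satisfies the KKT conditions of the maximum-margin problem
for the dataset `(x i, y i)`. -/
def IsKKT {n k : ℕ} (x y : Fin n → ℝ) (w b v : Fin k → ℝ) : Prop :=
  (∀ i, 1 ≤ y i * NNet w b v (x i)) ∧
  ∃ (lam : Fin n → ℝ) (sg : Fin n → Fin k → ℝ),
    (∀ i, 0 ≤ lam i) ∧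
    (∀ i j, sg i j ∈ Set.Icc (0 : ℝ) 1) ∧
    (∀ i j, 0 < w j * x i + b j → sg i j = 1) ∧
    (∀ i j, w j * x i + b j < 0 → sg i j = 0) ∧
    (∀ i, y i * NNet w b v (x i) ≠ 1 → lam i = 0) ∧
    (∀ j, v j ≠ 0 → w j = ∑ i, lam i * y i * v j * sg i j * x i) ∧
    (∀ j, v j ≠ 0 → b j = ∑ i, lam i * y i * v j * sg i j)

/-- `f` is locally affine at `x`: it agrees with an affine function on a neighborhood of `x`. -/
def LocallyAffineAt (f : ℝ → ℝ) (x : ℝ) : Prop :=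
  ∃ c d : ℝ, ∀ᶠ z in nhds x, f z = c * z + d

/-- `x` is an activation point of the network `(w, b, v)`. -/
def IsActivationPoint {k : ℕ} (w b v : Fin k → ℝ) (x : ℝ) : Prop :=
  ∃ j : Fin k, v j ≠ 0 ∧ w j ≠ 0 ∧ w j * x + b j = 0

/-- The derivative of `f` decreases at `x`: for all sufficiently small `ε > 0`,
the derivative at `x + ε` is smaller than the derivative at `x - ε`. -/
def DerivDecreasesAt (f : ℝ → ℝ) (x : ℝ) : Prop :=
  ∃ ε₀ > (0 : ℝ), ∀ ε : ℝ, 0 < ε → ε < ε₀ → deriv f (x + ε) < deriv f (x - ε)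

/-- The derivative of `f` increases at `x`: for all sufficiently small `ε > 0`,
the derivative at `x - ε` is smaller than the derivative at `x + ε`. -/
def DerivIncreasesAt (f : ℝ → ℝ) (x : ℝ) : Prop :=
  ∃ ε₀ > (0 : ℝ), ∀ ε : ℝ, 0 < ε → ε < ε₀ → deriv f (x - ε) < deriv f (x + ε)

lemma convexOn_affine (S : Set ℝ) (hS : Convex ℝ S) (a c : ℝ) :
    ConvexOn ℝ S (fun t => a * t + c) := by
  refine ⟨hS, ?_⟩
  intro p _ q _ α β hα hβ hαβ
  simp only [smul_eq_mul]
  have : α * (a * p + c) + β * (a * q + c) = a * (α * p + β * q) + c := by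
    have hβ1 : β = 1 - α := by linarith
    subst hβ1; ring
  linarith

lemma convexOn_relu_affine (S : Set ℝ) (hS : Convex ℝ S) (a c vv : ℝ) (hv : 0 ≤ vv) :
    ConvexOn ℝ S (fun t => vv * relu (a * t + c)) := by
  refine ⟨hS, ?_⟩
  intro p _ q _ α β hα hβ hαβ
  simp only [smul_eq_mul]
  have h1 : relu (a * (α * p + β * q) + c) ≤ α * relu (a * p + c) + β * relu (a * q + c) := by
    unfold relu
    refine max_le ?_ ?_
    · positivity
    · have heq : a * (α * p + β * q) + c = α * (a * p + c) + β * (a * q + c) := by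
        have hβ1 : β = 1 - α := by linarith
        subst hβ1; ring
      rw [heq]
      exact add_le_add (mul_le_mul_of_nonneg_left (le_max_right _ _) hα)
        (mul_le_mul_of_nonneg_left (le_max_right _ _) hβ)
  calc vv * relu (a * (α * p + β * q) + c)
      ≤ vv * (α * relu (a * p + c) + β * relu (a * q + c)) :=
        mul_le_mul_of_nonneg_left h1 hv
    _ = α * (vv * relu (a * p + c)) + β * (vv * relu (a * q + c)) := by ring

/-- An affine function with no root on a convex set has constant sign there. -/
lemma sign_const_on {I : Set ℝ} (hI : Convex ℝ I) {a c : ℝ}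
    (hnr : ∀ t ∈ I, a * t + c ≠ 0) {t u : ℝ} (ht : t ∈ I) (hu : u ∈ I)
    (hpos : 0 < a * t + c) : 0 < a * u + c := by
  rcases lt_trichotomy (a * u + c) 0 with hneg | h0 | hp
  · exfalso
    have ha : a ≠ 0 := by
      intro h; rw [h] at hpos hneg; simp at hpos hneg; linarith
    set r := -c / a with hr
    have hroot : a * r + c = 0 := by
      rw [hr]; field_simp; ring
    have h1 : 0 < a * (t - r) := by
      have : a * t + c = a * (t - r) + (a * r + c) := by ring
      rw [this, hroot, add_zero] at hpos; exact hpos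
    have h2 : a * (u - r) < 0 := by
      have : a * u + c = a * (u - r) + (a * r + c) := by ring
      rw [this, hroot, add_zero] at hneg; exact hneg
    have hrI : r ∈ I := by
      rcases lt_trichotomy a 0 with hal | ha0 | hag
      · have htr : t < r := by nlinarith
        have hur : r < u := by nlinarith
        exact hI.ordConnected.out ht hu ⟨htr.le, hur.le⟩
      · exact absurd ha0 ha
      · have htr : r < t := by nlinarith
        have hur : u < r := by nlinarith
        exact hI.ordConnected.out hu ht ⟨hur.le, htr.le⟩
    exact hnr r hrI hroot
  · exact absurd h0 (hnr u hu)
  · exact hp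

lemma convexOn_finset_sum {ι : Type*} (t : Finset ι) {S : Set ℝ} (f : ι → ℝ → ℝ)
    (hS : Convex ℝ S) (h : ∀ i ∈ t, ConvexOn ℝ S (f i)) :
    ConvexOn ℝ S (fun x => ∑ i ∈ t, f i x) := by
  classical
  induction t using Finset.cons_induction with
  | empty => simpa using convexOn_const 0 hS
  | cons a t ha ih =>
    simp only [Finset.sum_cons]
    exact (h a (Finset.mem_cons_self a t)).add (ih fun i hi => h i (Finset.mem_cons_of_mem hi))

/-- s·N is convex on a piece with no `s`-concave breakpoints. -/
lemma convex_piece {k : ℕ} (w b v : Fin k → ℝ) (s : ℝ) (hs : s = 1 ∨ s = -1)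
    {I : Set ℝ} (hI : Convex ℝ I)
    (hnb : ∀ j, v j ≠ 0 → w j ≠ 0 → s * v j < 0 → ∀ t ∈ I, w j * t + b j ≠ 0) :
    ConvexOn ℝ I (fun t => s * NNet w b v t) := by
  have : (fun t => s * NNet w b v t)
      = fun t => ∑ j : Fin k, (s * v j) * relu (w j * t + b j) := by
    funext t
    rw [NNet, Finset.mul_sum]
    exact Finset.sum_congr rfl fun j _ => by ring
  rw [this]
  refine convexOn_finset_sum Finset.univ
    (fun j => fun t => (s * v j) * relu (w j * t + b j)) hI ?_
  intro j _
  show ConvexOn ℝ I fun t => (s * v j) * relu (w j * t + b j)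
  by_cases hv : v j = 0
  · simp only [hv, mul_zero, zero_mul]
    exact convexOn_const 0 hI
  · rcases le_or_gt 0 (s * v j) with hsv | hsv
    · exact convexOn_relu_affine I hI _ _ _ hsv
    · by_cases hw : w j = 0
      · have : (fun t => (s * v j) * relu (w j * t + b j))
            = fun _ => (s * v j) * relu (b j) := by
          funext t; rw [hw]; ring_nf
        rw [this]
        exact convexOn_const _ hI
      · have hnr := hnb j hv hw hsv
        by_cases hex : ∃ t ∈ I, 0 < w j * t + b j
        · obtain ⟨t₀, ht₀, hpos⟩ := hex
          refine (convexOn_affine I hI (s * v j * w j) (s * v j * b j)).congr ?_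
          intro u hu
          have h1 : 0 < w j * u + b j := sign_const_on hI hnr ht₀ hu hpos
          simp only [relu, max_eq_right h1.le]
          ring
        · push_neg at hex
          refine (convexOn_const 0 hI).congr ?_
          intro u hu
          have h1 : w j * u + b j ≤ 0 := hex u hu
          simp only [relu, max_eq_left h1]
          simp

/-- convexity of finite sums (helper). -/
lemma convexOn_finset_sum' : True := trivial

/-- Three-point constancy for convex functions. -/
lemma convex_three_const {I : Set ℝ} {M : ℝ → ℝ} (hM : ConvexOn ℝ I M)
    {u c vv : ℝ} (hu : u ∈ I) (hv : vv ∈ I) (h1 : u < c) (h2 : c < vv)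
    (Mu : M u ≤ 1) (Mv : M vv ≤ 1) (Mc : 1 ≤ M c) :
    ∀ t ∈ Set.Icc u vv, M t = 1 := by
  have hcI : c ∈ I := hM.1.ordConnected.out hu hv ⟨h1.le, h2.le⟩
  -- upper bound on [u,vv]
  have hub : ∀ t ∈ Set.Icc u vv, M t ≤ 1 := by
    intro t ⟨htu, htv⟩
    have hseg : t ∈ segment ℝ u vv := by
      rw [segment_eq_Icc (h1.trans h2).le]; exact ⟨htu, htv⟩
    have := hM.2 hu hv
    -- use le_on_segment
    have h := ConvexOn.le_on_segment hM hu hv hseg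
    calc M t ≤ max (M u) (M vv) := h
      _ ≤ 1 := max_le Mu Mv
  have hMc1 : M c = 1 := le_antisymm (hub c ⟨h1.le, h2.le⟩) Mc
  -- lower bound
  have hlb : ∀ t ∈ Set.Icc u vv, 1 ≤ M t := by
    intro t ⟨htu, htv⟩
    rcases lt_trichotomy t c with htc | htc | htc
    · -- c is a convex combination of t and vv
      have htI : t ∈ I := hM.1.ordConnected.out hu hv ⟨htu, htv⟩
      set α := (vv - c) / (vv - t) with hα
      set β := (c - t) / (vv - t) with hβ
      have hden : 0 < vv - t := by linarith
      have hα0 : 0 < α := div_pos (by linarith) hden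
      have hβ0 : 0 ≤ β := div_nonneg (by linarith) hden.le
      have hαβ : α + β = 1 := by rw [hα, hβ]; field_simp; ring
      have hcomb : α • t + β • vv = c := by
        simp only [smul_eq_mul, hα, hβ]
        field_simp
        ring
      have := hM.2 htI hv hα0.le hβ0 hαβ
      rw [hcomb] at this
      simp only [smul_eq_mul] at this
      -- 1 = M c ≤ α M t + β M vv ≤ α M t + β
      by_contra hMt
      push_neg at hMt
      have : M c < α * 1 + β * 1 := by
        calc M c ≤ α * M t + β * M vv := this
          _ < α * 1 + β * 1 := by
              apply add_lt_add_of_lt_of_le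
              · exact (mul_lt_mul_iff_right₀ hα0).2 hMt
              · exact mul_le_mul_of_nonneg_left Mv hβ0
      rw [hMc1] at this
      nlinarith
    · rw [htc]; exact Mc
    · -- c is a convex combination of u and t
      have htI : t ∈ I := hM.1.ordConnected.out hu hv ⟨htu, htv⟩
      set α := (t - c) / (t - u) with hα
      set β := (c - u) / (t - u) with hβ
      have hden : 0 < t - u := by linarith
      have hα0 : 0 ≤ α := div_nonneg (by linarith) hden.le
      have hβ0 : 0 < β := div_pos (by linarith) hden
      have hαβ : α + β = 1 := by rw [hα, hβ]; field_simp; ring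
      have hcomb : α • u + β • t = c := by
        simp only [smul_eq_mul, hα, hβ]
        field_simp
        ring
      have := hM.2 hu htI hα0 hβ0.le hαβ
      rw [hcomb] at this
      simp only [smul_eq_mul] at this
      by_contra hMt
      push_neg at hMt
      have : M c < α * 1 + β * 1 := by
        calc M c ≤ α * M u + β * M t := this
          _ < α * 1 + β * 1 := by
              apply add_lt_add_of_le_of_lt
              · exact mul_le_mul_of_nonneg_left Mu hα0
              · exact (mul_lt_mul_iff_right₀ hβ0).2 hMt
      rw [hMc1] at this
      nlinarith
  intro t ht
  exact le_antisymm (hub t ht) (hlb t ht)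

/-- constancy on an open interval gives local affineness. -/
lemma locallyAffine_of_const {f : ℝ → ℝ} {a c d z : ℝ} (hz : z ∈ Set.Ioo a c)
    (h : ∀ t ∈ Set.Ioo a c, f t = d) : LocallyAffineAt f z := by
  refine ⟨0, d, ?_⟩
  filter_upwards [Ioo_mem_nhds hz.1 hz.2] with t ht
  rw [h t ht, zero_mul, zero_add]

lemma locallyAffineAt_of_no_boundary {k : ℕ} (w b v : Fin k → ℝ) (z : ℝ)
    (h : ∀ j, v j ≠ 0 → w j ≠ 0 → w j * z + b j ≠ 0) :
    LocallyAffineAt (NNet w b v) z := by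
  refine ⟨∑ j, if 0 < w j * z + b j then v j * w j else 0,
          ∑ j, if 0 < w j * z + b j then v j * b j else 0, ?_⟩
  have hj : ∀ j : Fin k, ∀ᶠ t in nhds z, v j * relu (w j * t + b j)
      = (if 0 < w j * z + b j then v j * w j else 0) * t
        + (if 0 < w j * z + b j then v j * b j else 0) := by
    intro j
    have hcont : ContinuousAt (fun t => w j * t + b j) z := by fun_prop
    rcases lt_trichotomy (w j * z + b j) 0 with hneg | hzero | hpos
    · have hev : ∀ᶠ t in nhds z, w j * t + b j < 0 :=
        hcont.eventually_lt_const hneg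
      filter_upwards [hev] with t ht
      rw [if_neg (by linarith), if_neg (by linarith)]
      simp [relu, max_eq_left ht.le]
    · rw [if_neg (by simp [hzero]), if_neg (by simp [hzero])]
      by_cases hvj : v j = 0
      · filter_upwards with t; simp [hvj]
      · have hwj : w j = 0 := by
          by_contra hwj
          exact h j hvj hwj hzero
        have hbj : b j = 0 := by rw [hwj] at hzero; linarith
        filter_upwards with t; simp [hwj, hbj, relu]
    · have hev : ∀ᶠ t in nhds z, 0 < w j * t + b j :=
        hcont.eventually_const_lt hpos
      filter_upwards [hev] with t ht
      rw [if_pos hpos, if_pos hpos]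
      rw [relu, max_eq_right ht.le]; ring
  have H : ∀ᶠ t in nhds z, ∀ j ∈ Finset.univ (α := Fin k),
      v j * relu (w j * t + b j)
      = (if 0 < w j * z + b j then v j * w j else 0) * t
        + (if 0 < w j * z + b j then v j * b j else 0) :=
    (Filter.eventually_all_finset _).mpr (fun j _ => hj j)
  filter_upwards [H] with t ht
  rw [NNet, Finset.sum_congr rfl ht, Finset.sum_add_distrib, ← Finset.sum_mul]

section Main
variable {n k : ℕ} {x y : Fin n → ℝ} {w b v : Fin k → ℝ} {lam : Fin n → ℝ}
  {sg : Fin n → Fin k → ℝ}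
noncomputable def Tj (x y : Fin n → ℝ) (lam : Fin n → ℝ) (sg : Fin n → Fin k → ℝ)
    (j : Fin k) : ℝ := ∑ i, lam i * y i * sg i j * x i
noncomputable def Sj (y : Fin n → ℝ) (lam : Fin n → ℝ) (sg : Fin n → Fin k → ℝ)
    (j : Fin k) : ℝ := ∑ i, lam i * y i * sg i j
lemma w_eq_vT (hstw : ∀ j, v j ≠ 0 → w j = ∑ i, lam i * y i * v j * sg i j * x i)
    {j : Fin k} (hv : v j ≠ 0) : w j = v j * Tj x y lam sg j := by
  rw [hstw j hv, Tj, Finset.mul_sum]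
  exact Finset.sum_congr rfl fun i _ => by ring
lemma b_eq_vS (hstb : ∀ j, v j ≠ 0 → b j = ∑ i, lam i * y i * v j * sg i j)
    {j : Fin k} (hv : v j ≠ 0) : b j = v j * Sj y lam sg j := by
  rw [hstb j hv, Sj, Finset.mul_sum]
  exact Finset.sum_congr rfl fun i _ => by ring
lemma T_line (hstw : ∀ j, v j ≠ 0 → w j = ∑ i, lam i * y i * v j * sg i j * x i)
    (hstb : ∀ j, v j ≠ 0 → b j = ∑ i, lam i * y i * v j * sg i j)
    {z : ℝ} {j : Fin k} (hv : v j ≠ 0) (hb : w j * z + b j = 0) :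
    Tj x y lam sg j * z + Sj y lam sg j = 0 := by
  have h : v j * (Tj x y lam sg j * z + Sj y lam sg j) = 0 := by
    have h1 := w_eq_vT hstw hv
    have h2 := b_eq_vS hstb hv
    calc v j * (Tj x y lam sg j * z + Sj y lam sg j)
        = (v j * Tj x y lam sg j) * z + v j * Sj y lam sg j := by ring
      _ = w j * z + b j := by rw [← h1, ← h2]
      _ = 0 := hb
  exact (mul_eq_zero.1 h).resolve_left hv
lemma T_ne (hstw : ∀ j, v j ≠ 0 → w j = ∑ i, lam i * y i * v j * sg i j * x i)
    {j : Fin k} (hv : v j ≠ 0) (hw : w j ≠ 0) : Tj x y lam sg j ≠ 0 := by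
  intro h
  apply hw
  rw [w_eq_vT hstw hv, h, mul_zero]
lemma key_identity
    (hstw : ∀ j, v j ≠ 0 → w j = ∑ i, lam i * y i * v j * sg i j * x i)
    (hstb : ∀ j, v j ≠ 0 → b j = ∑ i, lam i * y i * v j * sg i j)
    {z₁ z₂ : ℝ} {j₁ j₂ : Fin k} (hv₁ : v j₁ ≠ 0) (hv₂ : v j₂ ≠ 0)
    (hb₁ : w j₁ * z₁ + b j₁ = 0) (hb₂ : w j₂ * z₂ + b j₂ = 0) :
    Tj x y lam sg j₁ * (z₂ - z₁)
      + ∑ i, lam i * y i * (sg i j₂ - sg i j₁) * (x i * z₂ + 1) = 0 := by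
  have h1 := T_line hstw hstb hv₁ hb₁
  have h2 := T_line hstw hstb hv₂ hb₂
  have e1 : ∑ i, lam i * y i * (sg i j₂ - sg i j₁) * (x i * z₂ + 1)
      = (Tj x y lam sg j₂ * z₂ + Sj y lam sg j₂)
        - (Tj x y lam sg j₁ * z₂ + Sj y lam sg j₁) := by
    rw [Tj, Tj, Sj, Sj, Finset.sum_mul, Finset.sum_mul, ← Finset.sum_add_distrib,
      ← Finset.sum_add_distrib, ← Finset.sum_sub_distrib]
    exact Finset.sum_congr rfl fun i _ => by ring
  rw [e1]
  linear_combination h2 - h1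
lemma sg_one_pos (hsg1 : ∀ i j, 0 < w j * x i + b j → sg i j = 1)
    {z : ℝ} {j : Fin k} (hw : 0 < w j) (hb : w j * z + b j = 0)
    {i : Fin n} (hxi : z < x i) : sg i j = 1 := by
  apply hsg1; nlinarith
lemma sg_zero_pos (hsg0 : ∀ i j, w j * x i + b j < 0 → sg i j = 0)
    {z : ℝ} {j : Fin k} (hw : 0 < w j) (hb : w j * z + b j = 0)
    {i : Fin n} (hxi : x i < z) : sg i j = 0 := by
  apply hsg0; nlinarith
lemma sg_one_neg (hsg1 : ∀ i j, 0 < w j * x i + b j → sg i j = 1)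
    {z : ℝ} {j : Fin k} (hw : w j < 0) (hb : w j * z + b j = 0)
    {i : Fin n} (hxi : x i < z) : sg i j = 1 := by
  apply hsg1; nlinarith
lemma sg_zero_neg (hsg0 : ∀ i j, w j * x i + b j < 0 → sg i j = 0)
    {z : ℝ} {j : Fin k} (hw : w j < 0) (hb : w j * z + b j = 0)
    {i : Fin n} (hxi : z < x i) : sg i j = 0 := by
  apply hsg0; nlinarith

/-- F1, positive direction : two positive-direction breakpoints require an
intervening support vector. -/
lemma pair_sv_pos
    (hsg1 : ∀ i j, 0 < w j * x i + b j → sg i j = 1)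
    (hsg0 : ∀ i j, w j * x i + b j < 0 → sg i j = 0)
    (hstw : ∀ j, v j ≠ 0 → w j = ∑ i, lam i * y i * v j * sg i j * x i)
    (hstb : ∀ j, v j ≠ 0 → b j = ∑ i, lam i * y i * v j * sg i j)
    {z₁ z₂ : ℝ} {j₁ j₂ : Fin k} (hz : z₁ < z₂)
    (hv₁ : v j₁ ≠ 0) (hw₁ : 0 < w j₁) (hb₁ : w j₁ * z₁ + b j₁ = 0)
    (hv₂ : v j₂ ≠ 0) (hw₂ : 0 < w j₂) (hb₂ : w j₂ * z₂ + b j₂ = 0) :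
    ∃ i, lam i ≠ 0 ∧ z₁ ≤ x i ∧ x i ≤ z₂ := by
  by_contra hno
  push_neg at hno
  have hkey := key_identity hstw hstb hv₁ hv₂ hb₁ hb₂
  have hzero : ∑ i, lam i * y i * (sg i j₂ - sg i j₁) * (x i * z₂ + 1) = 0 := by
    apply Finset.sum_eq_zero
    intro i _
    by_cases hl : lam i = 0
    · simp [hl]
    · rcases lt_or_ge (x i) z₁ with hlt | hge
      · rw [sg_zero_pos hsg0 hw₁ hb₁ hlt, sg_zero_pos hsg0 hw₂ hb₂ (hlt.trans hz)]
        ring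
      · have hgt : z₂ < x i := lt_of_not_ge (fun hle => by exact absurd (hno i hl hge) (not_lt.2 hle))
        rw [sg_one_pos hsg1 hw₁ hb₁ (hz.trans hgt), sg_one_pos hsg1 hw₂ hb₂ hgt]
        ring
  rw [hzero, add_zero, mul_eq_zero] at hkey
  rcases hkey with h | h
  · exact T_ne hstw hv₁ (ne_of_gt hw₁) h
  · linarith
/-- F1, negative direction. -/
lemma pair_sv_neg
    (hsg1 : ∀ i j, 0 < w j * x i + b j → sg i j = 1)
    (hsg0 : ∀ i j, w j * x i + b j < 0 → sg i j = 0)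
    (hstw : ∀ j, v j ≠ 0 → w j = ∑ i, lam i * y i * v j * sg i j * x i)
    (hstb : ∀ j, v j ≠ 0 → b j = ∑ i, lam i * y i * v j * sg i j)
    {z₁ z₂ : ℝ} {j₁ j₂ : Fin k} (hz : z₁ < z₂)
    (hv₁ : v j₁ ≠ 0) (hw₁ : w j₁ < 0) (hb₁ : w j₁ * z₁ + b j₁ = 0)
    (hv₂ : v j₂ ≠ 0) (hw₂ : w j₂ < 0) (hb₂ : w j₂ * z₂ + b j₂ = 0) :
    ∃ i, lam i ≠ 0 ∧ z₁ ≤ x i ∧ x i ≤ z₂ := by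
  by_contra hno
  push_neg at hno
  have hkey := key_identity hstw hstb hv₁ hv₂ hb₁ hb₂
  have hzero : ∑ i, lam i * y i * (sg i j₂ - sg i j₁) * (x i * z₂ + 1) = 0 := by
    apply Finset.sum_eq_zero
    intro i _
    by_cases hl : lam i = 0
    · simp [hl]
    · rcases lt_or_ge (x i) z₁ with hlt | hge
      · rw [sg_one_neg hsg1 hw₁ hb₁ hlt, sg_one_neg hsg1 hw₂ hb₂ (hlt.trans hz)]
        ring
      · have hgt : z₂ < x i := lt_of_not_ge (fun hle => by exact absurd (hno i hl hge) (not_lt.2 hle))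
        rw [sg_zero_neg hsg0 hw₁ hb₁ (hz.trans hgt), sg_zero_neg hsg0 hw₂ hb₂ hgt]
        ring
  rw [hzero, add_zero, mul_eq_zero] at hkey
  rcases hkey with h | h
  · exact T_ne hstw hv₁ (ne_of_lt hw₁) h
  · linarith
/-- F2, positive direction: an `s`-concave positive-direction breakpoint excludes
any other positive-direction breakpoint above it (in a one-label one-sided region). -/
lemma bad_pos
    (hlam : ∀ i, 0 ≤ lam i)
    (hsgIcc : ∀ i j, sg i j ∈ Set.Icc (0:ℝ) 1)
    (hsg1 : ∀ i j, 0 < w j * x i + b j → sg i j = 1)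
    (hsg0 : ∀ i j, w j * x i + b j < 0 → sg i j = 0)
    (hstw : ∀ j, v j ≠ 0 → w j = ∑ i, lam i * y i * v j * sg i j * x i)
    (hstb : ∀ j, v j ≠ 0 → b j = ∑ i, lam i * y i * v j * sg i j)
    {s z₁ z₂ : ℝ} {j₁ j₂ : Fin k} (hs : s = 1 ∨ s = -1) (hz : z₁ < z₂)
    (hv₁ : v j₁ ≠ 0) (hw₁ : 0 < w j₁) (hb₁ : w j₁ * z₁ + b j₁ = 0)
    (hv₂ : v j₂ ≠ 0) (hw₂ : 0 < w j₂) (hb₂ : w j₂ * z₂ + b j₂ = 0)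
    (hlab : ∀ i, lam i ≠ 0 → z₁ ≤ x i → x i ≤ z₂ → y i = s)
    (hside : ∀ i, z₁ ≤ x i → x i ≤ z₂ → 0 ≤ x i * z₂)
    (hbad : s * v j₁ < 0) : False := by
  have hkey := key_identity hstw hstb hv₁ hv₂ hb₁ hb₂
  have hs2 : s * s = 1 := by rcases hs with h | h <;> (subst h; norm_num)
  have hvT : w j₁ = v j₁ * Tj x y lam sg j₁ := w_eq_vT hstw hv₁
  have hprod : (s * Tj x y lam sg j₁) * (s * v j₁) = w j₁ := by
    linear_combination (Tj x y lam sg j₁ * v j₁) * hs2 - hvT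
  have hsT : s * Tj x y lam sg j₁ < 0 := by
    by_contra h
    push_neg at h
    nlinarith [mul_nonpos_of_nonneg_of_nonpos h hbad.le]
  have hterm : ∀ i ∈ Finset.univ (α := Fin n),
      s * (lam i * y i * (sg i j₂ - sg i j₁) * (x i * z₂ + 1)) ≤ 0 := by
    intro i _
    by_cases hl : lam i = 0
    · simp [hl]
    · rcases lt_or_ge (x i) z₁ with hlt | hge
      · rw [sg_zero_pos hsg0 hw₁ hb₁ hlt, sg_zero_pos hsg0 hw₂ hb₂ (hlt.trans hz)]
        simp
      · rcases lt_or_ge z₂ (x i) with hgt | hle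
        · rw [sg_one_pos hsg1 hw₁ hb₁ (hz.trans hgt), sg_one_pos hsg1 hw₂ hb₂ hgt]
          simp
        · have hy : y i = s := hlab i hl hge hle
          have hxz : 0 ≤ x i * z₂ := hside i hge hle
          have hd : sg i j₂ ≤ sg i j₁ := by
            rcases lt_or_eq_of_le hle with hlt2 | heq
            · rw [sg_zero_pos hsg0 hw₂ hb₂ hlt2]
              exact (hsgIcc i j₁).1
            · rw [sg_one_pos hsg1 hw₁ hb₁ (heq ▸ hz : z₁ < x i)]
              exact (hsgIcc i j₂).2
          have h6 : lam i * (sg i j₂ - sg i j₁) ≤ 0 :=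
            mul_nonpos_of_nonneg_of_nonpos (hlam i) (by linarith)
          have h7 : s * (lam i * y i * (sg i j₂ - sg i j₁) * (x i * z₂ + 1))
              = (lam i * (sg i j₂ - sg i j₁)) * (x i * z₂ + 1) := by
            rw [hy]
            rcases hs with h | h <;> (subst h; ring)
          rw [h7]
          nlinarith [h6]
  have hsum : s * (∑ i, lam i * y i * (sg i j₂ - sg i j₁) * (x i * z₂ + 1)) ≤ 0 := by
    rw [Finset.mul_sum]
    exact Finset.sum_nonpos hterm
  have hexp : s * Tj x y lam sg j₁ * (z₂ - z₁)
      + s * (∑ i, lam i * y i * (sg i j₂ - sg i j₁) * (x i * z₂ + 1)) = 0 := by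
    linear_combination s * hkey
  nlinarith [mul_neg_of_neg_of_pos hsT (sub_pos.2 hz)]

/-- F2, negative direction. -/
lemma bad_neg
    (hlam : ∀ i, 0 ≤ lam i)
    (hsgIcc : ∀ i j, sg i j ∈ Set.Icc (0:ℝ) 1)
    (hsg1 : ∀ i j, 0 < w j * x i + b j → sg i j = 1)
    (hsg0 : ∀ i j, w j * x i + b j < 0 → sg i j = 0)
    (hstw : ∀ j, v j ≠ 0 → w j = ∑ i, lam i * y i * v j * sg i j * x i)
    (hstb : ∀ j, v j ≠ 0 → b j = ∑ i, lam i * y i * v j * sg i j)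
    {s z₁ z₂ : ℝ} {j₁ j₂ : Fin k} (hs : s = 1 ∨ s = -1) (hz : z₁ < z₂)
    (hv₁ : v j₁ ≠ 0) (hw₁ : w j₁ < 0) (hb₁ : w j₁ * z₁ + b j₁ = 0)
    (hv₂ : v j₂ ≠ 0) (hw₂ : w j₂ < 0) (hb₂ : w j₂ * z₂ + b j₂ = 0)
    (hlab : ∀ i, lam i ≠ 0 → z₁ ≤ x i → x i ≤ z₂ → y i = s)
    (hside : ∀ i, z₁ ≤ x i → x i ≤ z₂ → 0 ≤ x i * z₂)
    (hbad : s * v j₁ < 0) : False := by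
  have hkey := key_identity hstw hstb hv₁ hv₂ hb₁ hb₂
  have hs2 : s * s = 1 := by rcases hs with h | h <;> (subst h; norm_num)
  have hvT : w j₁ = v j₁ * Tj x y lam sg j₁ := w_eq_vT hstw hv₁
  have hprod : (s * Tj x y lam sg j₁) * (s * v j₁) = w j₁ := by
    linear_combination (Tj x y lam sg j₁ * v j₁) * hs2 - hvT
  have hsT : 0 < s * Tj x y lam sg j₁ := by
    by_contra h
    push_neg at h
    nlinarith [mul_nonneg (neg_nonneg.2 h) (neg_nonneg.2 hbad.le)]
  have hterm : ∀ i ∈ Finset.univ (α := Fin n),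
      0 ≤ s * (lam i * y i * (sg i j₂ - sg i j₁) * (x i * z₂ + 1)) := by
    intro i _
    by_cases hl : lam i = 0
    · simp [hl]
    · rcases lt_or_ge (x i) z₁ with hlt | hge
      · rw [sg_one_neg hsg1 hw₁ hb₁ hlt, sg_one_neg hsg1 hw₂ hb₂ (hlt.trans hz)]
        simp
      · rcases lt_or_ge z₂ (x i) with hgt | hle
        · rw [sg_zero_neg hsg0 hw₁ hb₁ (hz.trans hgt), sg_zero_neg hsg0 hw₂ hb₂ hgt]
          simp
        · have hy : y i = s := hlab i hl hge hle
          have hxz : 0 ≤ x i * z₂ := hside i hge hle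
          have hd : sg i j₁ ≤ sg i j₂ := by
            rcases eq_or_lt_of_le hge with heq | hlt2
            · rw [sg_one_neg hsg1 hw₂ hb₂ (heq ▸ hz : x i < z₂)]
              exact (hsgIcc i j₁).2
            · rw [sg_zero_neg hsg0 hw₁ hb₁ hlt2]
              exact (hsgIcc i j₂).1
          have h6 : 0 ≤ lam i * (sg i j₂ - sg i j₁) :=
            mul_nonneg (hlam i) (by linarith)
          have h7 : s * (lam i * y i * (sg i j₂ - sg i j₁) * (x i * z₂ + 1))
              = (lam i * (sg i j₂ - sg i j₁)) * (x i * z₂ + 1) := by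
            rw [hy]
            rcases hs with h | h <;> (subst h; ring)
          rw [h7]
          nlinarith [h6]
  have hsum : 0 ≤ s * (∑ i, lam i * y i * (sg i j₂ - sg i j₁) * (x i * z₂ + 1)) := by
    rw [Finset.mul_sum]
    exact Finset.sum_nonneg hterm
  have hexp : s * Tj x y lam sg j₁ * (z₂ - z₁)
      + s * (∑ i, lam i * y i * (sg i j₂ - sg i j₁) * (x i * z₂ + 1)) = 0 := by
    linear_combination s * hkey
  nlinarith [mul_pos hsT (sub_pos.2 hz)]

/-- Support vectors have margin exactly one. -/
lemma sv_one
    (hcomp : ∀ i, y i * NNet w b v (x i) ≠ 1 → lam i = 0)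
    {s : ℝ} {i : Fin n} (hl : lam i ≠ 0) (hyi : y i = s) :
    s * NNet w b v (x i) = 1 := by
  have h : y i * NNet w b v (x i) = 1 := by
    by_contra hne
    exact hl (hcomp i hne)
  rw [hyi] at h
  exact h

/-- Core structural lemma: five same-direction kinks in a good piece force a
support vector at the fourth one, and no support vector strictly between the
second and fourth ones. -/
lemma five_D
    (hcomp : ∀ i, y i * NNet w b v (x i) ≠ 1 → lam i = 0)
    {s : ℝ} (hs : s = 1 ∨ s = -1) {I : Set ℝ} (hI : Convex ℝ I)
    (hIlab : ∀ i, lam i ≠ 0 → x i ∈ I → y i = s)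
    (hnb : ∀ j, v j ≠ 0 → w j ≠ 0 → s * v j < 0 → ∀ t ∈ I, w j * t + b j ≠ 0)
    {D : ℝ → Prop}
    (hpair : ∀ z₁ z₂, z₁ < z₂ → D z₁ → D z₂ → ∃ i, lam i ≠ 0 ∧ z₁ ≤ x i ∧ x i ≤ z₂)
    {z₁ z₂ z₃ z₄ z₅ : ℝ} (h12 : z₁ < z₂) (h23 : z₂ < z₃) (h34 : z₃ < z₄) (h45 : z₄ < z₅)
    (hz1I : z₁ ∈ I) (hz5I : z₅ ∈ I)
    (hzK3 : ¬ LocallyAffineAt (NNet w b v) z₃)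
    (hD1 : D z₁) (hD2 : D z₂) (hD3 : D z₃) (hD4 : D z₄) (hD5 : D z₅) :
    (∃ i, lam i ≠ 0 ∧ x i = z₄) ∧ (∀ i, lam i ≠ 0 → ¬(z₂ < x i ∧ x i < z₄)) := by
  have memI : ∀ t : ℝ, z₁ ≤ t → t ≤ z₅ → t ∈ I := fun t ha hb =>
    hI.ordConnected.out hz1I hz5I ⟨ha, hb⟩
  have hss : s * s = 1 := by rcases hs with h | h <;> (subst h; norm_num)
  have Ms : ∀ i : Fin n, lam i ≠ 0 → x i ∈ I → s * NNet w b v (x i) = 1 := by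
    intro i hl hx
    exact sv_one hcomp hl (hIlab i hl hx)
  have hconv : ConvexOn ℝ I (fun t => s * NNet w b v t) := convex_piece w b v s hs hI hnb
  have noKink : ∀ a cc e zz : ℝ, a ∈ I → e ∈ I → a < cc → cc < e →
      s * NNet w b v a = 1 → s * NNet w b v cc = 1 → s * NNet w b v e = 1 →
      a < zz → zz < e → LocallyAffineAt (NNet w b v) zz := by
    intro a cc e zz haI heI hacc hcce hMa hMc hMe hza hze
    have hconst := convex_three_const hconv haI heI hacc hcce hMa.le hMe.le hMc.ge
    refine locallyAffine_of_const (a := a) (c := e) (d := s) ⟨hza, hze⟩ ?_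
    intro t ht
    have hMt := hconst t ⟨ht.1.le, ht.2.le⟩
    rcases hs with h | h <;> (subst h; linarith)
  obtain ⟨i₁, hl₁, h₁a, h₁b⟩ := hpair z₁ z₂ h12 hD1 hD2
  obtain ⟨i₂, hl₂, h₂a, h₂b⟩ := hpair z₂ z₃ h23 hD2 hD3
  obtain ⟨i₃, hl₃, h₃a, h₃b⟩ := hpair z₃ z₄ h34 hD3 hD4
  obtain ⟨i₄, hl₄, h₄a, h₄b⟩ := hpair z₄ z₅ h45 hD4 hD5
  have hu₁I : x i₁ ∈ I := memI _ h₁a (by linarith)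
  have hu₂I : x i₂ ∈ I := memI _ (by linarith) (by linarith)
  have hu₃I : x i₃ ∈ I := memI _ (by linarith) (by linarith)
  have hu₄I : x i₄ ∈ I := memI _ (by linarith) h₄b
  have M₁ := Ms i₁ hl₁ hu₁I
  have M₂ := Ms i₂ hl₂ hu₂I
  have M₃ := Ms i₃ hl₃ hu₃I
  have M₄ := Ms i₄ hl₄ hu₄I
  have hA : ¬(x i₁ < x i₂ ∧ x i₂ < x i₄) := by
    rintro ⟨p, q⟩
    exact hzK3 (noKink (x i₁) (x i₂) (x i₄) z₃ hu₁I hu₄I p q M₁ M₂ M₄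
      (by linarith) (by linarith))
  have hB : ¬(x i₁ < x i₃ ∧ x i₃ < x i₄) := by
    rintro ⟨p, q⟩
    exact hzK3 (noKink (x i₁) (x i₃) (x i₄) z₃ hu₁I hu₄I p q M₁ M₃ M₄
      (by linarith) (by linarith))
  -- deduce x i₂ = x i₁ = z₂ and x i₃ = x i₄ = z₄
  have hu12 : x i₁ ≤ x i₂ := by linarith
  have hu24 : x i₂ ≤ x i₄ := by linarith
  have h2eq : x i₂ = x i₁ := by
    rcases lt_or_eq_of_le hu12 with hlt | heq
    · exfalso
      rcases lt_or_eq_of_le hu24 with hlt2 | heq2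
      · exact hA ⟨hlt, hlt2⟩
      · linarith
    · exact heq.symm
  have hz2eq : x i₂ = z₂ := by linarith
  have h3eq : x i₃ = x i₄ := by
    have hu13 : x i₁ < x i₃ := by linarith
    rcases lt_or_eq_of_le (show x i₃ ≤ x i₄ by linarith) with hlt | heq
    · exact absurd ⟨hu13, hlt⟩ hB
    · exact heq
  have hz4eq : x i₃ = z₄ := by linarith
  constructor
  · exact ⟨i₃, hl₃, hz4eq⟩
  · rintro i hl ⟨hgt, hlt⟩
    have hxI : x i ∈ I := memI _ (by linarith) (by linarith)
    have Mi := Ms i hl hxI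
    have Mz₂ : s * NNet w b v z₂ = 1 := by rw [← hz2eq]; exact M₂
    have Mz₄ : s * NNet w b v z₄ = 1 := by rw [← hz4eq]; exact M₃
    exact hzK3 (noKink z₂ (x i) z₄ z₃ (memI _ h12.le (by linarith))
      (memI _ (by linarith) h45.le) hgt hlt Mz₂ Mi Mz₄ h23 h34)

/-- No six same-direction kinks in a good piece. -/
lemma six_D
    (hcomp : ∀ i, y i * NNet w b v (x i) ≠ 1 → lam i = 0)
    {s : ℝ} (hs : s = 1 ∨ s = -1) {I : Set ℝ} (hI : Convex ℝ I)
    (hIlab : ∀ i, lam i ≠ 0 → x i ∈ I → y i = s)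
    (hnb : ∀ j, v j ≠ 0 → w j ≠ 0 → s * v j < 0 → ∀ t ∈ I, w j * t + b j ≠ 0)
    {D : ℝ → Prop}
    (hpair : ∀ z₁ z₂, z₁ < z₂ → D z₁ → D z₂ → ∃ i, lam i ≠ 0 ∧ z₁ ≤ x i ∧ x i ≤ z₂)
    (z : Fin 6 → ℝ) (hmono : StrictMono z)
    (hall : ∀ m, z m ∈ I ∧ ¬ LocallyAffineAt (NNet w b v) (z m) ∧ D (z m)) : False := by
  have lt01 : z 0 < z 1 := hmono (by decide)
  have lt12 : z 1 < z 2 := hmono (by decide)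
  have lt23 : z 2 < z 3 := hmono (by decide)
  have lt34 : z 3 < z 4 := hmono (by decide)
  have lt45 : z 4 < z 5 := hmono (by decide)
  obtain ⟨⟨i, hli, hxi⟩, _⟩ := five_D hcomp hs hI hIlab hnb hpair lt01 lt12 lt23 lt34
    (hall 0).1 (hall 4).1 (hall 2).2.1
    (hall 0).2.2 (hall 1).2.2 (hall 2).2.2 (hall 3).2.2 (hall 4).2.2
  obtain ⟨_, hno⟩ := five_D hcomp hs hI hIlab hnb hpair lt12 lt23 lt34 lt45
    (hall 1).1 (hall 5).1 (hall 3).2.1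
    (hall 1).2.2 (hall 2).2.2 (hall 3).2.2 (hall 4).2.2 (hall 5).2.2
  exact hno i hli ⟨by rw [hxi]; exact lt23, by rw [hxi]; exact lt34⟩

/-- Extraction: a set with no six increasing elements has at most five elements. -/
lemma encard_le_five_of_no_six {P : Set ℝ}
    (h : ∀ z : Fin 6 → ℝ, StrictMono z → (∀ m, z m ∈ P) → False) : P.encard ≤ 5 := by
  by_contra hc
  push_neg at hc
  have h6 : (6 : ℕ∞) ≤ P.encard := Order.add_one_le_of_lt hc
  obtain ⟨t, htP, ht6⟩ := Set.exists_subset_encard_eq h6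
  have hfin : t.Finite := Set.finite_of_encard_eq_coe (k := 6) (by exact_mod_cast ht6)
  have hcard : hfin.toFinset.card = 6 := by
    have h' := hfin.encard_eq_coe_toFinset_card
    rw [ht6] at h'
    exact_mod_cast h'.symm
  set e := hfin.toFinset.orderIsoOfFin hcard with he
  refine h (fun m => (e m : ℝ)) ?_ ?_
  · intro a b' hab
    exact Subtype.coe_lt_coe.2 (e.strictMono hab)
  · intro m
    exact htP (hfin.mem_toFinset.1 (e m).2)

/-- Counting within one good piece: at most 10 kinks. -/
lemma piece_count
    (hsg1 : ∀ i j, 0 < w j * x i + b j → sg i j = 1)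
    (hsg0 : ∀ i j, w j * x i + b j < 0 → sg i j = 0)
    (hcomp : ∀ i, y i * NNet w b v (x i) ≠ 1 → lam i = 0)
    (hstw : ∀ j, v j ≠ 0 → w j = ∑ i, lam i * y i * v j * sg i j * x i)
    (hstb : ∀ j, v j ≠ 0 → b j = ∑ i, lam i * y i * v j * sg i j)
    {s : ℝ} (hs : s = 1 ∨ s = -1) {I : Set ℝ} (hI : Convex ℝ I)
    (hIlab : ∀ i, lam i ≠ 0 → x i ∈ I → y i = s)
    (hnb : ∀ j, v j ≠ 0 → w j ≠ 0 → s * v j < 0 → ∀ t ∈ I, w j * t + b j ≠ 0) :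
    ({z : ℝ | ¬ LocallyAffineAt (NNet w b v) z} ∩ I).encard ≤ 10 := by
  classical
  set P := {z : ℝ | z ∈ I ∧ ¬ LocallyAffineAt (NNet w b v) z
    ∧ ∃ j, v j ≠ 0 ∧ 0 < w j ∧ w j * z + b j = 0} with hP
  set Q := {z : ℝ | z ∈ I ∧ ¬ LocallyAffineAt (NNet w b v) z
    ∧ ∃ j, v j ≠ 0 ∧ w j < 0 ∧ w j * z + b j = 0} with hQ
  have hsub : {z : ℝ | ¬ LocallyAffineAt (NNet w b v) z} ∩ I ⊆ P ∪ Q := by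
    rintro z ⟨hzK, hzI⟩
    have hne : ∃ j, v j ≠ 0 ∧ w j ≠ 0 ∧ w j * z + b j = 0 := by
      by_contra hno
      push_neg at hno
      exact hzK (locallyAffineAt_of_no_boundary w b v z hno)
    obtain ⟨j, hv, hw, hb⟩ := hne
    rcases lt_or_gt_of_ne hw with hneg | hpos
    · exact Or.inr ⟨hzI, hzK, j, hv, hneg, hb⟩
    · exact Or.inl ⟨hzI, hzK, j, hv, hpos, hb⟩
  have hPcard : P.encard ≤ 5 := by
    apply encard_le_five_of_no_six
    intro z hmono hmem
    refine six_D hcomp hs hI hIlab hnb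
      (D := fun t => ∃ j, v j ≠ 0 ∧ 0 < w j ∧ w j * t + b j = 0) ?_ z hmono ?_
    · rintro z₁ z₂ hlt ⟨j₁, hv₁, hw₁, hb₁⟩ ⟨j₂, hv₂, hw₂, hb₂⟩
      exact pair_sv_pos hsg1 hsg0 hstw hstb hlt hv₁ hw₁ hb₁ hv₂ hw₂ hb₂
    · intro m
      exact hmem m
  have hQcard : Q.encard ≤ 5 := by
    apply encard_le_five_of_no_six
    intro z hmono hmem
    refine six_D hcomp hs hI hIlab hnb
      (D := fun t => ∃ j, v j ≠ 0 ∧ w j < 0 ∧ w j * t + b j = 0) ?_ z hmono ?_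
    · rintro z₁ z₂ hlt ⟨j₁, hv₁, hw₁, hb₁⟩ ⟨j₂, hv₂, hw₂, hb₂⟩
      exact pair_sv_neg hsg1 hsg0 hstw hstb hlt hv₁ hw₁ hb₁ hv₂ hw₂ hb₂
    · intro m
      exact hmem m
  calc ({z : ℝ | ¬ LocallyAffineAt (NNet w b v) z} ∩ I).encard
      ≤ (P ∪ Q).encard := Set.encard_le_encard hsub
    _ ≤ P.encard + Q.encard := Set.encard_union_le P Q
    _ ≤ 5 + 5 := add_le_add hPcard hQcard
    _ = 10 := by norm_num

/-- Abstract assembly: splitting a region at two subsingleton bad sets. -/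
lemma assembly {K R B₁ B₂ : Set ℝ} (hR : Convex ℝ R)
    (h₁ : B₁.Subsingleton) (h₂ : B₂.Subsingleton)
    (hpiece : ∀ I : Set ℝ, Convex ℝ I → I ⊆ R → (∀ z ∈ I, z ∉ B₁ ∧ z ∉ B₂) →
      (K ∩ I).encard ≤ 10) :
    (K ∩ R).encard ≤ 32 := by
  classical
  obtain ⟨d₁, hd₁⟩ : ∃ d, B₁ ⊆ {d} := by
    rcases h₁.eq_empty_or_singleton with h | ⟨a, h⟩
    · exact ⟨0, by simp [h]⟩
    · exact ⟨a, h ▸ subset_rfl⟩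
  obtain ⟨d₂, hd₂⟩ : ∃ d, B₂ ⊆ {d} := by
    rcases h₂.eq_empty_or_singleton with h | ⟨a, h⟩
    · exact ⟨0, by simp [h]⟩
    · exact ⟨a, h ▸ subset_rfl⟩
  set e₁ := min d₁ d₂ with he₁
  set e₂ := max d₁ d₂ with he₂
  have hmem₁ : d₁ = e₁ ∨ d₁ = e₂ := by
    rcases le_total d₁ d₂ with h | h
    · left; rw [he₁, min_eq_left h]
    · right; rw [he₂, max_eq_left h]
  have hmem₂ : d₂ = e₁ ∨ d₂ = e₂ := by
    rcases le_total d₂ d₁ with h | h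
    · left; rw [he₁, min_eq_right h]
    · right; rw [he₂, max_eq_right h]
  have hbad : ∀ z : ℝ, z ≠ e₁ → z ≠ e₂ → z ∉ B₁ ∧ z ∉ B₂ := by
    intro z hz1 hz2
    constructor
    · intro hzB
      have hzd := hd₁ hzB
      simp only [Set.mem_singleton_iff] at hzd
      rcases hmem₁ with h | h
      · exact hz1 (hzd.trans h)
      · exact hz2 (hzd.trans h)
    · intro hzB
      have hzd := hd₂ hzB
      simp only [Set.mem_singleton_iff] at hzd
      rcases hmem₂ with h | h
      · exact hz1 (hzd.trans h)
      · exact hz2 (hzd.trans h)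
  have he12 : e₁ ≤ e₂ := min_le_max
  have hcov : K ∩ R ⊆ ((K ∩ (R ∩ Set.Iio e₁)) ∪ (K ∩ (R ∩ Set.Ioo e₁ e₂))
      ∪ (K ∩ (R ∩ Set.Ioi e₂))) ∪ ({e₁, e₂} : Set ℝ) := by
    rintro z ⟨hzK, hzR⟩
    by_cases h1 : z = e₁
    · exact Or.inr (Or.inl h1)
    by_cases h2 : z = e₂
    · exact Or.inr (Or.inr h2)
    left
    rcases lt_trichotomy z e₁ with hlt | heq | hgt
    · exact Or.inl (Or.inl ⟨hzK, hzR, hlt⟩)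
    · exact absurd heq h1
    · rcases lt_trichotomy z e₂ with hlt2 | heq2 | hgt2
      · exact Or.inl (Or.inr ⟨hzK, hzR, hgt, hlt2⟩)
      · exact absurd heq2 h2
      · exact Or.inr ⟨hzK, hzR, hgt2⟩
  have hp1 : (K ∩ (R ∩ Set.Iio e₁)).encard ≤ 10 := by
    apply hpiece _ (hR.inter (convex_Iio e₁)) Set.inter_subset_left
    rintro z ⟨_, hz⟩
    exact hbad z (ne_of_lt hz) (ne_of_lt (lt_of_lt_of_le hz he12))
  have hp2 : (K ∩ (R ∩ Set.Ioo e₁ e₂)).encard ≤ 10 := by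
    apply hpiece _ (hR.inter (convex_Ioo e₁ e₂)) Set.inter_subset_left
    rintro z ⟨_, hz1, hz2⟩
    exact hbad z (ne_of_gt hz1) (ne_of_lt hz2)
  have hp3 : (K ∩ (R ∩ Set.Ioi e₂)).encard ≤ 10 := by
    apply hpiece _ (hR.inter (convex_Ioi e₂)) Set.inter_subset_left
    rintro z ⟨_, hz⟩
    exact hbad z (ne_of_gt (lt_of_le_of_lt he12 hz)) (ne_of_gt hz)
  have hpair2 : ({e₁, e₂} : Set ℝ).encard ≤ 2 := by
    apply (Set.encard_insert_le _ _).trans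
    rw [Set.encard_singleton]
    exact le_of_eq one_add_one_eq_two
  have hu : ((K ∩ (R ∩ Set.Iio e₁)) ∪ (K ∩ (R ∩ Set.Ioo e₁ e₂))
      ∪ (K ∩ (R ∩ Set.Ioi e₂))).encard ≤ 30 := by
    calc ((K ∩ (R ∩ Set.Iio e₁)) ∪ (K ∩ (R ∩ Set.Ioo e₁ e₂))
        ∪ (K ∩ (R ∩ Set.Ioi e₂))).encard
        ≤ ((K ∩ (R ∩ Set.Iio e₁)) ∪ (K ∩ (R ∩ Set.Ioo e₁ e₂))).encard
          + (K ∩ (R ∩ Set.Ioi e₂)).encard := Set.encard_union_le _ _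
      _ ≤ ((K ∩ (R ∩ Set.Iio e₁)).encard + (K ∩ (R ∩ Set.Ioo e₁ e₂)).encard)
          + (K ∩ (R ∩ Set.Ioi e₂)).encard := by
          gcongr
          exact Set.encard_union_le _ _
      _ ≤ (10 + 10) + 10 := by gcongr
      _ = 30 := by norm_num
  calc (K ∩ R).encard
      ≤ (((K ∩ (R ∩ Set.Iio e₁)) ∪ (K ∩ (R ∩ Set.Ioo e₁ e₂))
          ∪ (K ∩ (R ∩ Set.Ioi e₂))) ∪ ({e₁, e₂} : Set ℝ)).encard :=
        Set.encard_le_encard hcov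
    _ ≤ ((K ∩ (R ∩ Set.Iio e₁)) ∪ (K ∩ (R ∩ Set.Ioo e₁ e₂))
          ∪ (K ∩ (R ∩ Set.Ioi e₂))).encard + ({e₁, e₂} : Set ℝ).encard :=
        Set.encard_union_le _ _
    _ ≤ 30 + 2 := add_le_add hu hpair2
    _ = 32 := by norm_num

/-- Counting within one region (one-sided, single label): at most 32 kinks. -/
lemma region_count
    (hlam : ∀ i, 0 ≤ lam i)
    (hsgIcc : ∀ i j, sg i j ∈ Set.Icc (0:ℝ) 1)
    (hsg1 : ∀ i j, 0 < w j * x i + b j → sg i j = 1)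
    (hsg0 : ∀ i j, w j * x i + b j < 0 → sg i j = 0)
    (hcomp : ∀ i, y i * NNet w b v (x i) ≠ 1 → lam i = 0)
    (hstw : ∀ j, v j ≠ 0 → w j = ∑ i, lam i * y i * v j * sg i j * x i)
    (hstb : ∀ j, v j ≠ 0 → b j = ∑ i, lam i * y i * v j * sg i j)
    {s : ℝ} (hs : s = 1 ∨ s = -1) {R : Set ℝ} (hR : Convex ℝ R)
    (hRlab : ∀ i, x i ∈ R → y i = s)
    (hside : ∀ t ∈ R, ∀ u ∈ R, 0 ≤ t * u) :
    ({z : ℝ | ¬ LocallyAffineAt (NNet w b v) z} ∩ R).encard ≤ 32 := by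
  classical
  set Bp := {z : ℝ | z ∈ R ∧ ∃ j, v j ≠ 0 ∧ 0 < w j ∧ w j * z + b j = 0 ∧ s * v j < 0}
    with hBpdef
  set Bn := {z : ℝ | z ∈ R ∧ ∃ j, v j ≠ 0 ∧ w j < 0 ∧ w j * z + b j = 0 ∧ s * v j < 0}
    with hBndef
  have hlab2 : ∀ (p q : ℝ), p ∈ R → q ∈ R →
      ∀ i : Fin n, lam i ≠ 0 → p ≤ x i → x i ≤ q → y i = s := by
    intro p q hpR hqR i _ h1 h2
    exact hRlab i (hR.ordConnected.out hpR hqR ⟨h1, h2⟩)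
  have hside2 : ∀ (p q : ℝ), p ∈ R → q ∈ R →
      ∀ i : Fin n, p ≤ x i → x i ≤ q → 0 ≤ x i * q := by
    intro p q hpR hqR i h1 h2
    exact hside (x i) (hR.ordConnected.out hpR hqR ⟨h1, h2⟩) q hqR
  have hBp : Bp.Subsingleton := by
    have key : ∀ p q : ℝ, p < q → p ∈ Bp → q ∈ Bp → False := by
      rintro p q hpq ⟨hpR, jp, hvp, hwp, hbp, hsvp⟩ ⟨hqR, jq, hvq, hwq, hbq, _⟩
      exact bad_pos hlam hsgIcc hsg1 hsg0 hstw hstb hs hpq hvp hwp hbp hvq hwq hbq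
        (hlab2 p q hpR hqR) (hside2 p q hpR hqR) hsvp
    intro a ha a' ha'
    by_contra hne
    rcases lt_or_gt_of_ne hne with h | h
    · exact key a a' h ha ha'
    · exact key a' a h ha' ha
  have hBn : Bn.Subsingleton := by
    have key : ∀ p q : ℝ, p < q → p ∈ Bn → q ∈ Bn → False := by
      rintro p q hpq ⟨hpR, jp, hvp, hwp, hbp, hsvp⟩ ⟨hqR, jq, hvq, hwq, hbq, _⟩
      exact bad_neg hlam hsgIcc hsg1 hsg0 hstw hstb hs hpq hvp hwp hbp hvq hwq hbq
        (hlab2 p q hpR hqR) (hside2 p q hpR hqR) hsvp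
    intro a ha a' ha'
    by_contra hne
    rcases lt_or_gt_of_ne hne with h | h
    · exact key a a' h ha ha'
    · exact key a' a h ha' ha
  apply assembly hR hBp hBn
  intro I hIc hIR hInb
  apply piece_count hsg1 hsg0 hcomp hstw hstb hs hIc
  · intro i _ hx
    exact hRlab i (hIR hx)
  · intro j hv hw hsv t htI heq
    rcases lt_or_gt_of_ne hw with hneg | hpos
    · exact (hInb t htI).2 ⟨hIR htI, j, hv, hneg, heq, hsv⟩
    · exact (hInb t htI).1 ⟨hIR htI, j, hv, hpos, heq, hsv⟩


/-- Between two indices with different labels there is an adjacent flip. -/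
lemma exists_flip {n : ℕ} (y : Fin n → ℝ) (N : ℕ) :
    ∀ p q : Fin n, (q : ℕ) ≤ N → p < q → y p ≠ y q →
    ∃ (m : Fin n) (h : (m : ℕ) + 1 < n),
      p ≤ m ∧ (m : ℕ) + 1 ≤ (q : ℕ) ∧ y m ≠ y ⟨(m : ℕ) + 1, h⟩ := by
  induction N with
  | zero =>
    intro p q hq hpq _
    have h1 : (p : ℕ) < (q : ℕ) := hpq
    omega
  | succ N ih =>
    intro p q hq hpq hne
    have hqn : (q : ℕ) < n := q.isLt
    have hpv : (p : ℕ) < (q : ℕ) := hpq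
    by_cases hstep : (p : ℕ) + 1 = (q : ℕ)
    · refine ⟨p, by omega, le_refl p, by omega, ?_⟩
      have heq : (⟨(p : ℕ) + 1, by omega⟩ : Fin n) = q :=
        Fin.ext (show (p : ℕ) + 1 = (q : ℕ) by omega)
      rw [heq]
      exact hne
    · have hq1 : (q : ℕ) - 1 < n := by omega
      set q' : Fin n := ⟨(q : ℕ) - 1, hq1⟩ with hq'def
      have hq'v : (q' : ℕ) = (q : ℕ) - 1 := rfl
      have hpq' : p < q' := by
        rw [Fin.lt_def, hq'v]
        omega
      by_cases hyq : y q' = y q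
      · obtain ⟨m, hm, h1, h2, h3⟩ := ih p q'
          (show (q' : ℕ) ≤ N by rw [hq'v]; omega) hpq' (by rw [hyq]; exact hne)
        have h2' : (m : ℕ) + 1 ≤ (q : ℕ) - 1 := h2
        exact ⟨m, hm, h1, by omega, h3⟩
      · refine ⟨q', show ((q : ℕ) - 1) + 1 < n by omega,
          by rw [Fin.le_def]; show (p : ℕ) ≤ (q : ℕ) - 1; omega,
          show ((q : ℕ) - 1) + 1 ≤ (q : ℕ) by omega, ?_⟩
        have heq : (⟨(q' : ℕ) + 1, show ((q : ℕ) - 1) + 1 < n by omega⟩ : Fin n) = q :=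
          Fin.ext (show ((q : ℕ) - 1) + 1 = (q : ℕ) by omega)
        rw [heq]
        exact hyq

lemma encard_biUnion_le {α : Type*} (s : Finset ℕ) (t : ℕ → Set α) :
    (⋃ i ∈ s, t i).encard ≤ ∑ i ∈ s, (t i).encard := by
  classical
  induction s using Finset.cons_induction with
  | empty => simp
  | cons a s ha ih =>
    rw [Finset.sum_cons, Finset.cons_eq_insert, Finset.set_biUnion_insert]
    exact le_trans (Set.encard_union_le _ _) (add_le_add le_rfl ih)

end Main

theorem stmt0 {n k : ℕ} (x y : Fin n → ℝ)
    (hx : StrictMono x) (hy : ∀ i, y i = 1 ∨ y i = -1)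
    (r : ℕ)
    (hr : {i : Fin n | ∃ h : (i : ℕ) + 1 < n, y i ≠ y ⟨(i : ℕ) + 1, h⟩}.ncard ≤ r)
    (w b v : Fin k → ℝ)
    (hKKT : IsKKT x y w b v) :
    {z : ℝ | ¬ LocallyAffineAt (NNet w b v) z}.encard ≤ (32 * r + 66 : ℕ) := by
  classical
  obtain ⟨hmargin, lam, sg, hlam, hsgIcc, hsg1, hsg0, hcomp, hstw, hstb⟩ := hKKT
  set F : Set (Fin n) := {i | ∃ h : (i : ℕ) + 1 < n, y i ≠ y ⟨(i : ℕ) + 1, h⟩} with hFdef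
  have hFfin : F.Finite := Set.toFinite F
  set cutf : Fin n → ℝ := fun i => if h : (i : ℕ) + 1 < n then x ⟨(i : ℕ) + 1, h⟩ else 0
    with hcutf
  set C : Finset ℝ := insert 0 (hFfin.toFinset.image cutf) with hCdef
  have hCcard : C.card ≤ r + 1 := by
    refine (Finset.card_insert_le _ _).trans ?_
    have h1 : (hFfin.toFinset.image cutf).card ≤ hFfin.toFinset.card :=
      Finset.card_image_le
    have h2 : hFfin.toFinset.card = F.ncard :=
      (Set.ncard_eq_toFinset_card F hFfin).symm
    omega
  set f : ℝ → ℕ := fun z => (C.filter (fun c => c ≤ z)).card with hfdef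
  have hmono : Monotone f := by
    intro t u htu
    apply Finset.card_le_card
    apply Finset.monotone_filter_right
    intro c _ hc
    exact le_trans hc htu
  have hfle : ∀ z, f z ≤ r + 1 := fun z => le_trans (Finset.card_filter_le _ _) hCcard
  have hfiber : ∀ {t u : ℝ}, f t = f u → ∀ c ∈ C, (c ≤ t ↔ c ≤ u) := by
    have haux : ∀ {t u : ℝ}, t ≤ u → f t = f u →
        C.filter (fun c => c ≤ t) = C.filter (fun c => c ≤ u) := by
      intro t u htu hf
      apply Finset.eq_of_subset_of_card_le
      · apply Finset.monotone_filter_right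
        intro c _ hc
        exact le_trans hc htu
      · exact le_of_eq hf.symm
    have key : ∀ {t u : ℝ}, t ≤ u → f t = f u → ∀ c ∈ C, (c ≤ t ↔ c ≤ u) := by
      intro t u htu hf c hc
      have heq := haux htu hf
      constructor
      · intro hct
        have h2 : c ∈ C.filter (fun c => c ≤ u) := heq ▸ Finset.mem_filter.2 ⟨hc, hct⟩
        exact (Finset.mem_filter.1 h2).2
      · intro hcu
        have h2 : c ∈ C.filter (fun c => c ≤ t) := by
          rw [heq]
          exact Finset.mem_filter.2 ⟨hc, hcu⟩
        exact (Finset.mem_filter.1 h2).2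
    intro t u hf c hc
    rcases le_total t u with h | h
    · exact key h hf c hc
    · exact (key h hf.symm c hc).symm
  have hregion : ∀ m : ℕ,
      ({z : ℝ | ¬ LocallyAffineAt (NNet w b v) z} ∩ f ⁻¹' {m}).encard ≤ 32 := by
    intro m
    have hRconv : Convex ℝ (f ⁻¹' {m}) := by
      rw [convex_iff_ordConnected]
      constructor
      intro t ht u hu c hc
      simp only [Set.mem_preimage, Set.mem_singleton_iff] at ht hu ⊢
      have h1 : f c ≤ m := hu ▸ hmono hc.2
      have h2 : m ≤ f c := ht ▸ hmono hc.1
      omega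
    have hikey : ∀ p q : Fin n, p < q → y p ≠ y q →
        (∀ c ∈ C, (c ≤ x p ↔ c ≤ x q)) → False := by
      intro p q hpq hyne hiff
      obtain ⟨mm, hmn, h1, h2, h3⟩ := exists_flip y (q : ℕ) p q le_rfl hpq hyne
      set c := x ⟨(mm : ℕ) + 1, hmn⟩ with hcval
      have hcC : c ∈ C := by
        apply Finset.mem_insert_of_mem
        refine Finset.mem_image.2 ⟨mm, hFfin.mem_toFinset.2 ⟨hmn, h3⟩, ?_⟩
        rw [hcutf]
        simp only [dif_pos hmn, hcval]
      have hle : c ≤ x q := by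
        apply hx.monotone
        rw [Fin.le_def]
        exact h2
      have hnle : ¬ c ≤ x p := by
        apply not_le.2
        apply hx
        rw [Fin.lt_def]
        have h1' := Fin.le_def.1 h1
        show (p : ℕ) < (mm : ℕ) + 1
        omega
      exact hnle ((hiff c hcC).2 hle)
    have hlabel : ∃ s : ℝ, (s = 1 ∨ s = -1) ∧ ∀ i, x i ∈ f ⁻¹' {m} → y i = s := by
      by_cases hex : ∃ i : Fin n, x i ∈ f ⁻¹' {m}
      · obtain ⟨i₀, hi₀⟩ := hex
        refine ⟨y i₀, hy i₀, ?_⟩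
        intro i hi
        by_contra hne
        have hsame : ∀ c ∈ C, (c ≤ x i₀ ↔ c ≤ x i) := by
          apply hfiber
          simp only [Set.mem_preimage, Set.mem_singleton_iff] at hi₀ hi
          rw [hi₀, hi]
        rcases lt_trichotomy i₀ i with h | h | h
        · exact hikey i₀ i h (Ne.symm hne) hsame
        · rw [h] at hne
          exact hne rfl
        · exact hikey i i₀ h hne (fun c hc => (hsame c hc).symm)
      · push_neg at hex
        exact ⟨1, Or.inl rfl, fun i hi => absurd hi (hex i)⟩
    have hRside : ∀ t ∈ f ⁻¹' {m}, ∀ u ∈ f ⁻¹' {m}, 0 ≤ t * u := by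
      intro t ht u hu
      have h0C : (0 : ℝ) ∈ C := Finset.mem_insert_self 0 _
      simp only [Set.mem_preimage, Set.mem_singleton_iff] at ht hu
      have hiff := hfiber (ht.trans hu.symm) 0 h0C
      rcases le_or_gt 0 t with hp | hneg
      · exact mul_nonneg hp (hiff.1 hp)
      · have hun : u < 0 := by
          by_contra hge
          push_neg at hge
          exact absurd (hiff.2 hge) (not_le.2 hneg)
        nlinarith
    obtain ⟨s, hs, hlab⟩ := hlabel
    exact region_count hlam hsgIcc hsg1 hsg0 hcomp hstw hstb hs hRconv hlab hRside
  have hcover : {z : ℝ | ¬ LocallyAffineAt (NNet w b v) z}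
      ⊆ ⋃ m ∈ Finset.range (r + 2),
        ({z : ℝ | ¬ LocallyAffineAt (NNet w b v) z} ∩ f ⁻¹' {m}) := by
    intro z hz
    simp only [Set.mem_iUnion]
    exact ⟨f z, Finset.mem_range.2 (by have := hfle z; omega), hz, rfl⟩
  calc {z : ℝ | ¬ LocallyAffineAt (NNet w b v) z}.encard
      ≤ (⋃ m ∈ Finset.range (r + 2),
          ({z : ℝ | ¬ LocallyAffineAt (NNet w b v) z} ∩ f ⁻¹' {m})).encard :=
        Set.encard_le_encard hcover
    _ ≤ ∑ m ∈ Finset.range (r + 2),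
          ({z : ℝ | ¬ LocallyAffineAt (NNet w b v) z} ∩ f ⁻¹' {m}).encard :=
        encard_biUnion_le _ _
    _ ≤ ∑ _m ∈ Finset.range (r + 2), (32 : ℕ∞) :=
        Finset.sum_le_sum (fun m _ => hregion m)
    _ = (r + 2) • (32 : ℕ∞) := by rw [Finset.sum_const, Finset.card_range]
    _ = (((r + 2) * 32 : ℕ) : ℕ∞) := by
        rw [nsmul_eq_mul]
        push_cast
        ring
    _ ≤ ((32 * r + 66 : ℕ) : ℕ∞) := by
        rw [Nat.cast_le]
        omega
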